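/- Let f : ℝ → ℝ be bounded with |f(z) - K₂/z| ≤ K₃/z² for |z| ≥ 1. Fix x ∈ ℝ with nearest integer i₀, and δ ∈ (0, 1/2]. Then |lim_{n→∞} ∑_{i=-n, i≠i₀}^{n} f((x-i)/δ)| ≤ C·δ for a constant C independent of x (depending on K₂, K₃, and δ only through the factor δ). -/

import Mathlib

open Filter Finset

private lemma basel_aux : ∀ n : ℤ, 1 ≤ n →
    ∑ k ∈ Finset.Icc (1:ℤ) n, (1:ℝ)/(k:ℝ)^2 ≤ 2 - 1/(n:ℝ) := by
  refine Int.le_induction ?_ ?_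
  · norm_num
  · intro n hn ih
    have hins : Finset.Icc (1:ℤ) (n+1) = insert (n+1) (Finset.Icc (1:ℤ) n) := by
      ext k; simp [Finset.mem_Icc]; omega
    have hnot : (n+1) ∉ Finset.Icc (1:ℤ) n := by simp
    rw [hins, Finset.sum_insert hnot]
    have hn' : (1:ℝ) ≤ (n:ℝ) := by exact_mod_cast hn
    have h1 : (1:ℝ)/((n:ℝ)+1)^2 ≤ 1/(n:ℝ) - 1/((n:ℝ)+1) := by
      rw [div_sub_div _ _ (by linarith) (by linarith)]
      rw [div_le_div_iff₀ (by nlinarith) (by nlinarith)]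
      ring_nf; nlinarith
    push_cast
    linarith

private lemma basel (n : ℕ) : ∑ k ∈ Finset.Icc (1:ℤ) n, (1:ℝ)/(k:ℝ)^2 ≤ 2 := by
  rcases Nat.eq_zero_or_pos n with h | h
  · subst h; simp
  · have h2 := basel_aux n (by exact_mod_cast h)
    have h3 : (0:ℝ) < ((n:ℤ):ℝ) := by exact_mod_cast h
    have hp : (0:ℝ) < 1/((n:ℤ):ℝ) := by positivity
    linarith

set_option maxHeartbeats 1000000 in
theorem limit_sum_order_delta (f : ℝ → ℝ) (K₂ K₃ M : ℝ) (hK₃ : 0 < K₃) (hM : 0 < M)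
    (hbound : ∀ z : ℝ, |f z| ≤ M)
    (hdecay : ∀ z : ℝ, 1 ≤ |z| → |f z - K₂ / z| ≤ K₃ / z ^ 2) :
    ∃ C > 0, ∀ δ ∈ Set.Ioc (0:ℝ) (1/2), ∀ (x : ℝ) (i₀ : ℤ) (γ : ℝ),
      x = i₀ + γ → γ ∈ Set.Ioc (-(1:ℝ)/2) (1/2) →
      ∀ l : ℝ,
        Tendsto (fun n : ℕ =>
            ∑ i ∈ (Finset.Icc (-(n:ℤ)) (n:ℤ)).erase i₀, f ((x - i) / δ))
          atTop (nhds l) →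
        |l| ≤ C * δ := by
  refine ⟨(8/3)*|K₂| + 8*K₃ + 1, by positivity, ?_⟩
  rintro δ ⟨hδ0, hδ2⟩ x i₀ γ hx ⟨hγ1, hγ2⟩ l hl
  set g : ℤ → ℝ := fun k => f ((γ - k) / δ) with hg
  set d : ℝ := (i₀.natAbs : ℝ) with hd
  have hγab : |γ| ≤ 1/2 := abs_le.mpr ⟨by linarith, hγ2⟩
  have habsk : ∀ k : ℤ, |(k:ℝ)| - 1/2 ≤ |γ - (k:ℝ)| := by
    intro k
    have h1 : |(k:ℝ)| - |γ| ≤ |(k:ℝ) - γ| := abs_sub_abs_le_abs_sub _ _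
    rw [abs_sub_comm] at h1
    linarith
  -- per-term bound
  have hterm : ∀ k : ℤ, k ≠ 0 → |g k| ≤ (|K₂| + K₃) * (δ / |γ - (k:ℝ)|) := by
    intro k hk
    have hk1 : (1:ℝ) ≤ |(k:ℝ)| := by
      have h1 : (1:ℤ) ≤ |k| := Int.one_le_abs hk
      calc (1:ℝ) ≤ ((|k| : ℤ) : ℝ) := by exact_mod_cast h1
        _ = |(k:ℝ)| := by push_cast; ring
    have hu2 : 1/2 ≤ |γ - (k:ℝ)| := by have := habsk k; linarith
    have hu0 : (0:ℝ) < |γ - (k:ℝ)| := by linarith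
    have hne : γ - (k:ℝ) ≠ 0 := abs_pos.mp hu0
    have hδu : δ ≤ |γ - (k:ℝ)| := le_trans hδ2 hu2
    have hz1 : 1 ≤ |(γ - (k:ℝ))/δ| := by
      rw [abs_div, abs_of_pos hδ0, le_div_iff₀ hδ0]; linarith
    have hdec := hdecay _ hz1
    have hK2e : |K₂ / ((γ - (k:ℝ))/δ)| = |K₂| * (δ / |γ - (k:ℝ)|) := by
      rw [abs_div, abs_div, abs_of_pos hδ0, div_div_eq_mul_div, mul_div_assoc]
    have hK3e : K₃ / ((γ - (k:ℝ))/δ)^2 = K₃ * (δ / |γ - (k:ℝ)|)^2 := by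
      rw [div_pow, div_div_eq_mul_div, div_pow, sq_abs, mul_div_assoc]
    have h8 : |g k| ≤ |K₂| * (δ / |γ - (k:ℝ)|) + K₃ * (δ / |γ - (k:ℝ)|)^2 := by
      have hrepr : g k = K₂ / ((γ - (k:ℝ))/δ) + (g k - K₂ / ((γ - (k:ℝ))/δ)) := by ring
      have htri : |g k| ≤ |K₂ / ((γ - (k:ℝ))/δ)| + |g k - K₂ / ((γ - (k:ℝ))/δ)| := by
        calc |g k| = |K₂ / ((γ - (k:ℝ))/δ) + (g k - K₂ / ((γ - (k:ℝ))/δ))| := by rw [← hrepr]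
          _ ≤ _ := abs_add_le _ _
      have h9 : |g k - K₂ / ((γ - (k:ℝ))/δ)| ≤ K₃ / ((γ - (k:ℝ))/δ)^2 := hdec
      rw [hK2e] at htri; rw [hK3e] at h9; linarith
    have hq0 : 0 < δ / |γ - (k:ℝ)| := by positivity
    have hq1 : δ / |γ - (k:ℝ)| ≤ 1 := by rw [div_le_one hu0]; exact hδu
    have hq2 : (δ / |γ - (k:ℝ)|)^2 ≤ δ / |γ - (k:ℝ)| := by nlinarith
    have hq3 : K₃ * (δ / |γ - (k:ℝ)|)^2 ≤ K₃ * (δ / |γ - (k:ℝ)|) :=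
      mul_le_mul_of_nonneg_left hq2 hK₃.le
    linarith
  -- pair bound
  have hpair : ∀ k : ℤ, 1 ≤ k →
      |g k + g (-k)| ≤ ((4/3)*|K₂| + 4*K₃) * δ * (1/(k:ℝ)^2) := by
    intro k hk
    have hk1 : (1:ℝ) ≤ (k:ℝ) := by exact_mod_cast hk
    have hgneg : g (-k) = f ((γ + (k:ℝ))/δ) := by
      simp only [hg, Int.cast_neg, sub_neg_eq_add]
    have hgk : g k = f ((γ - (k:ℝ))/δ) := rfl
    have hne1 : γ - (k:ℝ) ≠ 0 := by intro h; nlinarith [sub_eq_zero.mp h]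
    have hne2 : γ + (k:ℝ) ≠ 0 := by nlinarith
    have hu1 : (k:ℝ) - 1/2 ≤ |γ - (k:ℝ)| := by
      have h1 := habsk k
      rw [abs_of_pos (by linarith : (0:ℝ) < (k:ℝ))] at h1; linarith
    have hu2 : (k:ℝ) - 1/2 ≤ |γ + (k:ℝ)| := by
      have h1 : (k:ℝ) - 1/2 ≤ γ + (k:ℝ) := by linarith
      exact h1.trans (le_abs_self _)
    have hz1 : 1 ≤ |(γ - (k:ℝ))/δ| := by
      rw [abs_div, abs_of_pos hδ0, le_div_iff₀ hδ0]; linarith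
    have hz2 : 1 ≤ |(γ + (k:ℝ))/δ| := by
      rw [abs_div, abs_of_pos hδ0, le_div_iff₀ hδ0]; linarith
    have hd1 := hdecay _ hz1
    have hd2 := hdecay _ hz2
    have hK3e1 : K₃ / ((γ - (k:ℝ))/δ)^2 = K₃ * δ^2 / (γ - (k:ℝ))^2 := by
      rw [div_pow, div_div_eq_mul_div]
    have hK3e2 : K₃ / ((γ + (k:ℝ))/δ)^2 = K₃ * δ^2 / (γ + (k:ℝ))^2 := by
      rw [div_pow, div_div_eq_mul_div]
    have hkpos : (0:ℝ) < (k:ℝ)^2 := by positivity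
    have hsq1 : (k:ℝ)^2/4 ≤ (γ - (k:ℝ))^2 := by
      have h1 : ((k:ℝ)-1/2)*((k:ℝ)-1/2) ≤ |γ - (k:ℝ)| * |γ - (k:ℝ)| :=
        mul_self_le_mul_self (by linarith) hu1
      rw [abs_mul_abs_self] at h1
      nlinarith [sq_nonneg ((k:ℝ) - 1)]
    have hsq2 : (k:ℝ)^2/4 ≤ (γ + (k:ℝ))^2 := by
      have h1 : ((k:ℝ)-1/2)*((k:ℝ)-1/2) ≤ |γ + (k:ℝ)| * |γ + (k:ℝ)| :=
        mul_self_le_mul_self (by linarith) hu2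
      rw [abs_mul_abs_self] at h1
      nlinarith [sq_nonneg ((k:ℝ) - 1)]
    have hb1 : K₃ * δ^2 / (γ - (k:ℝ))^2 ≤ 2*K₃*δ * (1/(k:ℝ)^2) := by
      calc K₃ * δ^2 / (γ - (k:ℝ))^2 ≤ K₃ * δ^2 / ((k:ℝ)^2/4) :=
            div_le_div_of_nonneg_left (by positivity) (by positivity) hsq1
        _ = (4*K₃*δ^2) * (1/(k:ℝ)^2) := by ring
        _ ≤ 2*K₃*δ * (1/(k:ℝ)^2) := by
            apply mul_le_mul_of_nonneg_right _ (by positivity)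
            nlinarith [mul_nonneg (mul_pos hK₃ hδ0).le
              (show (0:ℝ) ≤ 1 - 2*δ by linarith)]
    have hb2 : K₃ * δ^2 / (γ + (k:ℝ))^2 ≤ 2*K₃*δ * (1/(k:ℝ)^2) := by
      calc K₃ * δ^2 / (γ + (k:ℝ))^2 ≤ K₃ * δ^2 / ((k:ℝ)^2/4) :=
            div_le_div_of_nonneg_left (by positivity) (by positivity) hsq2
        _ = (4*K₃*δ^2) * (1/(k:ℝ)^2) := by ring
        _ ≤ 2*K₃*δ * (1/(k:ℝ)^2) := by
            apply mul_le_mul_of_nonneg_right _ (by positivity)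
            nlinarith [mul_nonneg (mul_pos hK₃ hδ0).le
              (show (0:ℝ) ≤ 1 - 2*δ by linarith)]
    have hprod : K₂ / ((γ - (k:ℝ))/δ) + K₂ / ((γ + (k:ℝ))/δ)
        = K₂ * δ * (2*γ) / ((γ - (k:ℝ)) * (γ + (k:ℝ))) := by
      field_simp; ring
    have hdenpos : (0:ℝ) < (k:ℝ)^2 - γ^2 := by nlinarith
    have habden : |(γ - (k:ℝ)) * (γ + (k:ℝ))| = (k:ℝ)^2 - γ^2 := by
      have h1 : (γ - (k:ℝ)) * (γ + (k:ℝ)) = -((k:ℝ)^2 - γ^2) := by ring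
      rw [h1, abs_neg, abs_of_pos hdenpos]
    have hb3 : |K₂ / ((γ - (k:ℝ))/δ) + K₂ / ((γ + (k:ℝ))/δ)|
        ≤ (4/3)*|K₂| * δ * (1/(k:ℝ)^2) := by
      rw [hprod, abs_div, habden]
      have hnum : |K₂ * δ * (2*γ)| ≤ |K₂| * δ := by
        rw [abs_mul, abs_mul, abs_of_pos hδ0, abs_mul, abs_two]
        nlinarith [mul_nonneg (mul_nonneg (abs_nonneg K₂) hδ0.le)
          (show (0:ℝ) ≤ 1 - 2*|γ| by linarith [hγab])]
      have hden34 : (3/4)*(k:ℝ)^2 ≤ (k:ℝ)^2 - γ^2 := by nlinarith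
      calc |K₂ * δ * (2*γ)| / ((k:ℝ)^2 - γ^2)
          ≤ (|K₂| * δ) / ((3/4)*(k:ℝ)^2) :=
            div_le_div₀ (by positivity) hnum (by positivity) hden34
        _ = (4/3)*|K₂| * δ * (1/(k:ℝ)^2) := by ring
    have htri : |g k + g (-k)|
        ≤ |f ((γ - (k:ℝ))/δ) - K₂ / ((γ - (k:ℝ))/δ)|
          + |f ((γ + (k:ℝ))/δ) - K₂ / ((γ + (k:ℝ))/δ)|
          + |K₂ / ((γ - (k:ℝ))/δ) + K₂ / ((γ + (k:ℝ))/δ)| := by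
      have hrepr : g k + g (-k)
          = (f ((γ - (k:ℝ))/δ) - K₂ / ((γ - (k:ℝ))/δ))
            + (f ((γ + (k:ℝ))/δ) - K₂ / ((γ + (k:ℝ))/δ))
            + (K₂ / ((γ - (k:ℝ))/δ) + K₂ / ((γ + (k:ℝ))/δ)) := by
        rw [hgk, hgneg]; ring
      rw [hrepr]; exact abs_add_three _ _ _
    rw [hK3e1] at hd1; rw [hK3e2] at hd2
    have hfin : (2*K₃*δ) * (1/(k:ℝ)^2) + (2*K₃*δ) * (1/(k:ℝ)^2)
        + (4/3)*|K₂| * δ * (1/(k:ℝ)^2) = ((4/3)*|K₂| + 4*K₃) * δ * (1/(k:ℝ)^2) := by ring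
    linarith
  -- bound on the symmetric sums
  have hS' : ∀ n : ℕ, |∑ k ∈ (Finset.Icc (-(n:ℤ)) (n:ℤ)).erase 0, g k|
      ≤ ((8/3)*|K₂| + 8*K₃) * δ := by
    intro n
    have hsplit : (Finset.Icc (-(n:ℤ)) (n:ℤ)).erase 0
        = Finset.Icc (-(n:ℤ)) (-1) ∪ Finset.Icc 1 (n:ℤ) := by
      ext k
      simp only [Finset.mem_erase, Finset.mem_Icc, Finset.mem_union]
      omega
    have hdisj : Disjoint (Finset.Icc (-(n:ℤ)) (-1)) (Finset.Icc (1:ℤ) (n:ℤ)) := by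
      rw [Finset.disjoint_left]
      intro a ha hb
      simp only [Finset.mem_Icc] at ha hb
      omega
    have hneg : ∑ k ∈ Finset.Icc (-(n:ℤ)) (-1), g k
        = ∑ k ∈ Finset.Icc (1:ℤ) (n:ℤ), g (-k) := by
      refine Finset.sum_nbij' (fun k => -k) (fun k => -k) ?_ ?_ ?_ ?_ ?_
      · intro a ha; simp only [Finset.mem_Icc] at *; omega
      · intro a ha; simp only [Finset.mem_Icc] at *; omega
      · intro a _; ring
      · intro a _; ring
      · intro a _; simp
    rw [hsplit, Finset.sum_union hdisj, hneg, ← Finset.sum_add_distrib]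
    calc |∑ k ∈ Finset.Icc (1:ℤ) (n:ℤ), (g (-k) + g k)|
        ≤ ∑ k ∈ Finset.Icc (1:ℤ) (n:ℤ), |g (-k) + g k| := Finset.abs_sum_le_sum_abs _ _
      _ ≤ ∑ k ∈ Finset.Icc (1:ℤ) (n:ℤ), ((4/3)*|K₂| + 4*K₃) * δ * (1/(k:ℝ)^2) := by
          refine Finset.sum_le_sum ?_
          intro k hk
          simp only [Finset.mem_Icc] at hk
          rw [add_comm (g (-k))]
          exact hpair k hk.1
      _ = ((4/3)*|K₂| + 4*K₃) * δ * ∑ k ∈ Finset.Icc (1:ℤ) (n:ℤ), (1:ℝ)/(k:ℝ)^2 := by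
          rw [Finset.mul_sum]
      _ ≤ ((4/3)*|K₂| + 4*K₃) * δ * 2 :=
          mul_le_mul_of_nonneg_left (basel n) (by positivity)
      _ = ((8/3)*|K₂| + 8*K₃) * δ := by ring
  -- reindex the given sums
  have hreindex : ∀ n : ℕ, ∑ i ∈ (Finset.Icc (-(n:ℤ)) (n:ℤ)).erase i₀, f ((x - i)/δ)
      = ∑ k ∈ (Finset.Icc (-(n:ℤ) - i₀) ((n:ℤ) - i₀)).erase 0, g k := by
    intro n
    refine Finset.sum_nbij' (fun i => i - i₀) (fun k => k + i₀) ?_ ?_ ?_ ?_ ?_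
    · intro a ha; simp only [Finset.mem_erase, Finset.mem_Icc] at *; omega
    · intro a ha; simp only [Finset.mem_erase, Finset.mem_Icc] at *; omega
    · intro a _; ring
    · intro a _; ring
    · intro a _
      simp only [hg]
      congr 1
      rw [hx]; push_cast; ring
  -- difference bound
  have hdiff : ∀ n : ℕ, i₀.natAbs + 1 ≤ n →
      |(∑ k ∈ (Finset.Icc (-(n:ℤ)) (n:ℤ)).erase 0, g k)
        - ∑ k ∈ (Finset.Icc (-(n:ℤ) - i₀) ((n:ℤ) - i₀)).erase 0, g k|
      ≤ 2*d*((|K₂|+K₃)*δ) / ((n:ℝ) + (1/2 - d)) := by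
    intro n hn
    set A := Finset.Icc (-(n:ℤ)) (n:ℤ) with hA
    set B := Finset.Icc (-(n:ℤ) - i₀) ((n:ℤ) - i₀) with hB
    have hAe : A.erase 0 = ((A ∩ B).erase 0) ∪ (A \ B) := by
      ext k
      simp only [hA, hB, Finset.mem_erase, Finset.mem_union, Finset.mem_inter,
        Finset.mem_sdiff, Finset.mem_Icc]
      omega
    have hBe : B.erase 0 = ((A ∩ B).erase 0) ∪ (B \ A) := by
      ext k
      simp only [hA, hB, Finset.mem_erase, Finset.mem_union, Finset.mem_inter,
        Finset.mem_sdiff, Finset.mem_Icc]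
      omega
    have hdisjA : Disjoint ((A ∩ B).erase 0) (A \ B) := by
      rw [Finset.disjoint_left]
      intro a ha hb
      simp only [Finset.mem_erase, Finset.mem_inter] at ha
      simp only [Finset.mem_sdiff] at hb
      exact hb.2 ha.2.2
    have hdisjB : Disjoint ((A ∩ B).erase 0) (B \ A) := by
      rw [Finset.disjoint_left]
      intro a ha hb
      simp only [Finset.mem_erase, Finset.mem_inter] at ha
      simp only [Finset.mem_sdiff] at hb
      exact hb.2 ha.2.1
    rw [hAe, hBe, Finset.sum_union hdisjA, Finset.sum_union hdisjB]
    have hcancel : ∀ s t u : ℝ, (s + t) - (s + u) = t - u := by intros; ring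
    rw [hcancel]
    set Mn : ℝ := (|K₂|+K₃) * δ / ((n:ℝ) + (1/2 - d)) with hMn
    have hdn : d ≤ (n:ℝ) - 1 := by
      rw [hd]
      have : (i₀.natAbs : ℝ) + 1 ≤ (n:ℝ) := by exact_mod_cast hn
      linarith
    have hdpos : (0:ℝ) < (n:ℝ) + (1/2 - d) := by linarith
    have hMn0 : 0 ≤ Mn := div_nonneg (by positivity) hdpos.le
    have hone : ∀ k : ℤ, k ∈ A \ B ∨ k ∈ B \ A → |g k| ≤ Mn := by
      intro k hk
      have hk' : (n:ℤ) + 1 ≤ (k.natAbs : ℤ) + (i₀.natAbs : ℤ) ∧ k ≠ 0 := by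
        rcases hk with hk | hk <;>
          (simp only [hA, hB, Finset.mem_sdiff, Finset.mem_Icc, not_and, not_le] at hk;
           constructor <;> omega)
      have hkr : (n:ℝ) + 1 - d ≤ |(k:ℝ)| := by
        have h2 : (n:ℤ) + 1 - (i₀.natAbs : ℤ) ≤ |k| := by
          rw [Int.abs_eq_natAbs]; omega
        have h3 : ((n:ℝ) + 1 - (i₀.natAbs : ℕ) : ℝ) ≤ ((|k| : ℤ) : ℝ) := by
          exact_mod_cast h2
        rw [Int.cast_abs] at h3
        rw [hd]
        linarith
      have hgk2 : (n:ℝ) + (1/2 - d) ≤ |γ - (k:ℝ)| := by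
        have := habsk k; linarith
      calc |g k| ≤ (|K₂|+K₃) * (δ / |γ - (k:ℝ)|) := hterm k hk'.2
        _ ≤ (|K₂|+K₃) * (δ / ((n:ℝ) + (1/2 - d))) := by
            apply mul_le_mul_of_nonneg_left _ (by positivity)
            exact div_le_div_of_nonneg_left hδ0.le hdpos hgk2
        _ = Mn := by rw [hMn, mul_div_assoc]
    have hcardA : (A \ B).card ≤ i₀.natAbs := by
      have hsub : A \ B ⊆ Finset.Icc ((n:ℤ) - i₀ + 1) (n:ℤ)
          ∪ Finset.Icc (-(n:ℤ)) (-(n:ℤ) - i₀ - 1) := by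
        intro k hk
        simp only [hA, hB, Finset.mem_sdiff, Finset.mem_Icc, Finset.mem_union,
          not_and, not_le] at hk ⊢
        omega
      calc (A \ B).card ≤ _ := Finset.card_le_card hsub
        _ ≤ (Finset.Icc ((n:ℤ) - i₀ + 1) (n:ℤ)).card
            + (Finset.Icc (-(n:ℤ)) (-(n:ℤ) - i₀ - 1)).card := Finset.card_union_le _ _
        _ ≤ i₀.natAbs := by
            rw [Int.card_Icc, Int.card_Icc]; omega
    have hcardB : (B \ A).card ≤ i₀.natAbs := by
      have hsub : B \ A ⊆ Finset.Icc ((n:ℤ) + 1) ((n:ℤ) - i₀)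
          ∪ Finset.Icc (-(n:ℤ) - i₀) (-(n:ℤ) - 1) := by
        intro k hk
        simp only [hA, hB, Finset.mem_sdiff, Finset.mem_Icc, Finset.mem_union,
          not_and, not_le] at hk ⊢
        omega
      calc (B \ A).card ≤ _ := Finset.card_le_card hsub
        _ ≤ (Finset.Icc ((n:ℤ) + 1) ((n:ℤ) - i₀)).card
            + (Finset.Icc (-(n:ℤ) - i₀) (-(n:ℤ) - 1)).card := Finset.card_union_le _ _
        _ ≤ i₀.natAbs := by
            rw [Int.card_Icc, Int.card_Icc]; omega
    have hsumA : |∑ k ∈ A \ B, g k| ≤ d * Mn := by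
      calc |∑ k ∈ A \ B, g k| ≤ ∑ k ∈ A \ B, |g k| := Finset.abs_sum_le_sum_abs _ _
        _ ≤ (A \ B).card • Mn :=
            Finset.sum_le_card_nsmul _ _ _ (fun k hk => hone k (Or.inl hk))
        _ = ((A \ B).card : ℝ) * Mn := nsmul_eq_mul _ _
        _ ≤ d * Mn := by
            apply mul_le_mul_of_nonneg_right _ hMn0
            rw [hd]; exact_mod_cast hcardA
    have hsumB : |∑ k ∈ B \ A, g k| ≤ d * Mn := by
      calc |∑ k ∈ B \ A, g k| ≤ ∑ k ∈ B \ A, |g k| := Finset.abs_sum_le_sum_abs _ _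
        _ ≤ (B \ A).card • Mn :=
            Finset.sum_le_card_nsmul _ _ _ (fun k hk => hone k (Or.inr hk))
        _ = ((B \ A).card : ℝ) * Mn := nsmul_eq_mul _ _
        _ ≤ d * Mn := by
            apply mul_le_mul_of_nonneg_right _ hMn0
            rw [hd]; exact_mod_cast hcardB
    calc |(∑ k ∈ A \ B, g k) - ∑ k ∈ B \ A, g k|
        ≤ |∑ k ∈ A \ B, g k| + |∑ k ∈ B \ A, g k| := abs_sub _ _
      _ ≤ d * Mn + d * Mn := add_le_add hsumA hsumB
      _ = 2*d*((|K₂|+K₃)*δ) / ((n:ℝ) + (1/2 - d)) := by rw [hMn]; ring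
  -- take the limit
  have hv : Tendsto (fun n : ℕ =>
      ∑ k ∈ (Finset.Icc (-(n:ℤ) - i₀) ((n:ℤ) - i₀)).erase 0, g k) atTop (nhds l) := by
    have heq : (fun n : ℕ => ∑ i ∈ (Finset.Icc (-(n:ℤ)) (n:ℤ)).erase i₀, f ((x - i)/δ))
        = fun n : ℕ => ∑ k ∈ (Finset.Icc (-(n:ℤ) - i₀) ((n:ℤ) - i₀)).erase 0, g k :=
      funext hreindex
    rwa [heq] at hl
  have h0 : Tendsto (fun n : ℕ =>
      (∑ k ∈ (Finset.Icc (-(n:ℤ)) (n:ℤ)).erase 0, g k)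
        - ∑ k ∈ (Finset.Icc (-(n:ℤ) - i₀) ((n:ℤ) - i₀)).erase 0, g k) atTop (nhds 0) := by
    apply squeeze_zero_norm' (a := fun n : ℕ => 2*d*((|K₂|+K₃)*δ) / ((n:ℝ) + (1/2 - d)))
    · filter_upwards [eventually_ge_atTop (i₀.natAbs + 1)] with n hn
      simpa [Real.norm_eq_abs] using hdiff n hn
    · exact Tendsto.div_atTop tendsto_const_nhds
        (tendsto_atTop_add_const_right _ _ tendsto_natCast_atTop_atTop)
  have hu : Tendsto (fun n : ℕ =>
      ∑ k ∈ (Finset.Icc (-(n:ℤ)) (n:ℤ)).erase 0, g k) atTop (nhds l) := by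
    have h1 := hv.add h0
    have heq : (fun n : ℕ =>
        (∑ k ∈ (Finset.Icc (-(n:ℤ) - i₀) ((n:ℤ) - i₀)).erase 0, g k)
          + ((∑ k ∈ (Finset.Icc (-(n:ℤ)) (n:ℤ)).erase 0, g k)
            - ∑ k ∈ (Finset.Icc (-(n:ℤ) - i₀) ((n:ℤ) - i₀)).erase 0, g k))
        = fun n : ℕ => ∑ k ∈ (Finset.Icc (-(n:ℤ)) (n:ℤ)).erase 0, g k := by
      funext n; ring
    rw [heq] at h1
    simpa using h1
  have hlfin : |l| ≤ ((8/3)*|K₂| + 8*K₃) * δ :=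
    le_of_tendsto hu.abs (Eventually.of_forall hS')
  nlinarith [abs_nonneg K₂]
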